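/- arXiv:2205.01955 — 2 statements merged into one kernel-verified Lean document; each statement's English description precedes it below -/
import Mathlib

section
/- The greatest fuzzy auto-bisimulation of a fuzzy automaton A is a fuzzy equivalence relation (reflexive, symmetric, transitive) and its norm equals 1. -/
/-- A complete residuated lattice: a complete lattice with a commutative monoid
structure whose unit is the top element, together with a residuum `himp`
satisfying the adjointness property. -/
class CompleteResiduatedLattice (L : Type*) extends CompleteLattice L, CommMonoid L where
  himp : L → L → L
  adjoint : ∀ a b c : L, a * b ≤ c ↔ a ≤ himp b c
  one_eq_top : (1 : L) = ⊤

open CompleteResiduatedLattice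

variable {L : Type*} [CompleteResiduatedLattice L]

/-- Sup-⊗ composition of fuzzy relations. -/
def relComp {X Y Z : Type*} (φ : X → Y → L) (ψ : Y → Z → L) : X → Z → L :=
  fun x z => ⨆ y, φ x y * ψ y z

/-- Composition of a fuzzy relation with a fuzzy set. -/
def relSet {X Y : Type*} (φ : X → Y → L) (g : Y → L) : X → L :=
  fun x => ⨆ y, φ x y * g y

/-- Composition of a fuzzy set with a fuzzy relation. -/
def setRel {X Y : Type*} (f : X → L) (φ : X → Y → L) : Y → L :=
  fun y => ⨆ x, f x * φ x y

/-- The converse of a fuzzy relation. -/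
def conv {X Y : Type*} (φ : X → Y → L) : Y → X → L := fun y x => φ x y

/-- The fuzzy degree of inclusion of fuzzy sets. -/
def fuzS {X : Type*} (f g : X → L) : L := ⨅ x, himp (f x) (g x)

/-- The fuzzy degree of equality of fuzzy sets. -/
def fuzE {X : Type*} (f g : X → L) : L := ⨅ x, himp (f x) (g x) ⊓ himp (g x) (f x)

/-- A fuzzy automaton over the alphabet `Sig` with state set `A`. -/
structure FuzzyAutomaton (L : Type*) (Sig : Type*) (A : Type*) where
  δ : A → Sig → A → L
  σ : A → L
  τ : A → L

variable {Sig : Type*}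

/-- A fuzzy simulation between two fuzzy automata. -/
def IsFuzzySimulation {A A' : Type*} (M : FuzzyAutomaton L Sig A)
    (M' : FuzzyAutomaton L Sig A') (φ : A → A' → L) : Prop :=
  (∀ s, relComp (conv φ) (fun x y => M.δ x s y) ≤
        relComp (fun x' y' => M'.δ x' s y') (conv φ)) ∧
  relSet (conv φ) M.τ ≤ M'.τ

/-- The norm of a fuzzy simulation: `S(σ^A, σ^{A'} ∘ φ⁻¹)`. -/
def simNorm {A A' : Type*} (M : FuzzyAutomaton L Sig A)
    (M' : FuzzyAutomaton L Sig A') (φ : A → A' → L) : L :=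
  fuzS M.σ (setRel M'.σ (conv φ))

/-- A fuzzy bisimulation between two fuzzy automata. -/
def IsFuzzyBisimulation {A A' : Type*} (M : FuzzyAutomaton L Sig A)
    (M' : FuzzyAutomaton L Sig A') (φ : A → A' → L) : Prop :=
  IsFuzzySimulation M M' φ ∧ IsFuzzySimulation M' M (conv φ)

/-- The norm of a fuzzy bisimulation. -/
def bisimNorm {A A' : Type*} (M : FuzzyAutomaton L Sig A)
    (M' : FuzzyAutomaton L Sig A') (φ : A → A' → L) : L :=
  simNorm M M' φ ⊓ simNorm M' M (conv φ)

/-- The fuzzy language recognized from a given state: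
`L(A,x)(s₁…sₙ) = (δ_{s₁} ∘ … ∘ δ_{sₙ} ∘ τ)(x)`. -/
def langFrom {A : Type*} (M : FuzzyAutomaton L Sig A) : A → List Sig → L
  | x, [] => M.τ x
  | x, s :: w => ⨆ y, M.δ x s y * langFrom M y w

/-- The fuzzy language recognized by a fuzzy automaton. -/
def lang {A : Type*} (M : FuzzyAutomaton L Sig A) (w : List Sig) : L :=
  ⨆ x, M.σ x * langFrom M x w

section Aux

lemma crl_mul_le_right {a c : L} (h : a ≤ c) (b : L) : a * b ≤ c * b :=
  (adjoint a b (c * b)).2 (h.trans ((adjoint c b (c * b)).1 le_rfl))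

lemma crl_mul_le {a b c d : L} (h1 : a ≤ c) (h2 : b ≤ d) : a * b ≤ c * d :=
  (crl_mul_le_right h1 b).trans
    (by rw [mul_comm c b, mul_comm c d]; exact crl_mul_le_right h2 c)

lemma crl_iSup_mul {ι : Sort*} (f : ι → L) (a : L) : (⨆ i, f i) * a = ⨆ i, f i * a := by
  apply le_antisymm
  · rw [adjoint]
    exact iSup_le fun i => (adjoint _ _ _).1 (le_iSup (fun i => f i * a) i)
  · exact iSup_le fun i => crl_mul_le_right (le_iSup f i) a

lemma crl_mul_iSup {ι : Sort*} (a : L) (f : ι → L) : (a * ⨆ i, f i) = ⨆ i, a * f i := by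
  rw [mul_comm, crl_iSup_mul]
  simp [mul_comm]

lemma crl_bot_mul (a : L) : (⊥ : L) * a = ⊥ :=
  le_antisymm ((adjoint _ _ _).2 bot_le) bot_le


lemma le_relComp {X Y Z : Type*} (φ : X → Y → L) (ψ : Y → Z → L) (x : X) (y : Y) (z : Z) :
    φ x y * ψ y z ≤ relComp φ ψ x z := by
  unfold relComp; exact le_iSup (fun y => φ x y * ψ y z) y

lemma le_relSet {X Y : Type*} (φ : X → Y → L) (g : Y → L) (x : X) (y : Y) :
    φ x y * g y ≤ relSet φ g x := by
  unfold relSet; exact le_iSup (fun y => φ x y * g y) y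

lemma le_setRel {X Y : Type*} (f : X → L) (φ : X → Y → L) (x : X) (y : Y) :
    f x * φ x y ≤ setRel f φ y := by
  unfold setRel; exact le_iSup (fun x => f x * φ x y) x

lemma relComp_mono {X Y Z : Type*} {φ φ' : X → Y → L} {ψ ψ' : Y → Z → L}
    (h1 : φ ≤ φ') (h2 : ψ ≤ ψ') : relComp φ ψ ≤ relComp φ' ψ' := fun x => fun z =>
  iSup_le fun y => (crl_mul_le (h1 x y) (h2 y z)).trans (le_relComp _ _ x y z)

lemma relComp_assoc {W X Y Z : Type*} (φ : W → X → L) (ψ : X → Y → L) (χ : Y → Z → L) :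
    relComp (relComp φ ψ) χ = relComp φ (relComp ψ χ) := by
  funext w z
  simp only [relComp, crl_iSup_mul, crl_mul_iSup, mul_assoc]
  exact iSup_comm

lemma relSet_relComp {X Y Z : Type*} (φ : X → Y → L) (ψ : Y → Z → L) (g : Z → L) :
    relSet (relComp φ ψ) g = relSet φ (relSet ψ g) := by
  funext x
  simp only [relSet, relComp, crl_iSup_mul, crl_mul_iSup, mul_assoc]
  exact iSup_comm

lemma relSet_mono {X Y : Type*} {φ φ' : X → Y → L} {g g' : Y → L}
    (h1 : φ ≤ φ') (h2 : g ≤ g') : relSet φ g ≤ relSet φ' g' := fun x =>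
  iSup_le fun y => (crl_mul_le (h1 x y) (h2 y)).trans (le_relSet _ _ x y)

lemma conv_relComp {X Y Z : Type*} (φ : X → Y → L) (ψ : Y → Z → L) :
    conv (relComp φ ψ) = relComp (conv ψ) (conv φ) := by
  funext z x
  simp only [conv, relComp, mul_comm]

omit [CompleteResiduatedLattice L] in
lemma conv_conv {X Y : Type*} (φ : X → Y → L) : conv (conv φ) = φ := rfl

variable {A : Type*}

lemma bisim_conv (M : FuzzyAutomaton L Sig A) {φ : A → A → L}
    (h : IsFuzzyBisimulation M M φ) : IsFuzzyBisimulation M M (conv φ) :=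
  ⟨h.2, h.1⟩

lemma sim_comp (M : FuzzyAutomaton L Sig A) {φ ψ : A → A → L}
    (hφ : IsFuzzySimulation M M φ) (hψ : IsFuzzySimulation M M ψ) :
    IsFuzzySimulation M M (relComp φ ψ) := by
  constructor
  · intro s
    rw [conv_relComp]
    calc relComp (relComp (conv ψ) (conv φ)) (fun x y => M.δ x s y)
        = relComp (conv ψ) (relComp (conv φ) (fun x y => M.δ x s y)) := relComp_assoc _ _ _
      _ ≤ relComp (conv ψ) (relComp (fun x y => M.δ x s y) (conv φ)) :=
          relComp_mono le_rfl (hφ.1 s)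
      _ = relComp (relComp (conv ψ) (fun x y => M.δ x s y)) (conv φ) :=
          (relComp_assoc _ _ _).symm
      _ ≤ relComp (relComp (fun x y => M.δ x s y) (conv ψ)) (conv φ) :=
          relComp_mono (hψ.1 s) le_rfl
      _ = relComp (fun x y => M.δ x s y) (relComp (conv ψ) (conv φ)) := relComp_assoc _ _ _
  · rw [conv_relComp, relSet_relComp]
    exact (relSet_mono le_rfl hφ.2).trans hψ.2

lemma bisim_comp (M : FuzzyAutomaton L Sig A) {φ ψ : A → A → L}
    (hφ : IsFuzzyBisimulation M M φ) (hψ : IsFuzzyBisimulation M M ψ) :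
    IsFuzzyBisimulation M M (relComp φ ψ) :=
  ⟨sim_comp M hφ.1 hψ.1, by rw [conv_relComp]; exact sim_comp M hψ.2 hφ.2⟩

open Classical in
/-- The identity fuzzy relation. -/
noncomputable def idFRel (A : Type*) : A → A → L := fun x y => if x = y then 1 else ⊥

lemma idFRel_sim (M : FuzzyAutomaton L Sig A) : IsFuzzySimulation M M (idFRel A) := by
  constructor
  · intro s x y
    apply iSup_le; intro z
    show idFRel A z x * M.δ z s y ≤ _
    by_cases h : z = x
    · subst h
      rw [idFRel, if_pos rfl, one_mul]
      calc M.δ z s y = M.δ z s y * idFRel A y y := by rw [idFRel, if_pos rfl, mul_one]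
        _ ≤ relComp (fun a b => M.δ a s b) (conv (idFRel A)) z y := le_relComp (fun a b => M.δ a s b) (conv (idFRel A)) z y y
    · rw [idFRel, if_neg h, crl_bot_mul]
      exact bot_le
  · intro x
    apply iSup_le; intro z
    show idFRel A z x * M.τ z ≤ _
    by_cases h : z = x
    · subst h
      rw [idFRel, if_pos rfl, one_mul]
    · rw [idFRel, if_neg h, crl_bot_mul]
      exact bot_le

lemma idFRel_conv : conv (idFRel (L := L) A) = idFRel A := by
  funext x y
  simp only [conv, idFRel]
  by_cases h : x = y
  · subst h; rfl
  · rw [if_neg h, if_neg (fun hh => h hh.symm)]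

lemma idFRel_bisim (M : FuzzyAutomaton L Sig A) : IsFuzzyBisimulation M M (idFRel A) :=
  ⟨idFRel_sim M, by rw [idFRel_conv]; exact idFRel_sim M⟩

end Aux

theorem stmt18 {A : Type*} [Nonempty A] (M : FuzzyAutomaton L Sig A) :
    letI g : A → A → L := fun x y => ⨆ φ ∈ {φ : A → A → L | IsFuzzyBisimulation M M φ}, φ x y
    (∀ x, (1 : L) ≤ g x x) ∧ conv g = g ∧ relComp g g ≤ g ∧ bisimNorm M M g = 1 := by
  set S : Set (A → A → L) := {φ : A → A → L | IsFuzzyBisimulation M M φ} with hS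
  set g : A → A → L := fun x y => ⨆ φ ∈ S, φ x y with hgdef
  have hle : ∀ φ ∈ S, ∀ x y, φ x y ≤ g x y := by
    intro φ hφ x y
    exact le_iSup₂ (f := fun φ (_ : φ ∈ S) => φ x y) φ hφ
  have hconvle : ∀ φ ∈ S, conv φ ≤ conv g := fun φ hφ x y => hle φ hφ y x
  -- reflexivity
  have href : ∀ x, (1 : L) ≤ g x x := by
    intro x
    calc (1 : L) = idFRel A x x := by rw [idFRel, if_pos rfl]
      _ ≤ g x x := hle _ (idFRel_bisim M) x x
  -- symmetry
  have hsymm : conv g = g := by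
    have h1 : ∀ x y, g y x ≤ g x y := by
      intro x y
      apply iSup_le; intro φ; apply iSup_le; intro hφ
      exact hle (conv φ) (bisim_conv M hφ) x y
    funext x y
    exact le_antisymm (h1 x y) (h1 y x)
  -- g is itself a bisimulation
  have hsim : IsFuzzySimulation M M g := by
    constructor
    · intro s x y
      apply iSup_le; intro z
      show (⨆ φ ∈ S, φ z x) * M.δ z s y ≤ _
      rw [crl_iSup_mul]
      apply iSup_le; intro φ
      rw [crl_iSup_mul]
      apply iSup_le; intro hφ
      calc φ z x * M.δ z s y ≤ relComp (conv φ) (fun a b => M.δ a s b) x y := le_relComp (conv φ) (fun a b => M.δ a s b) x z y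
        _ ≤ relComp (fun a b => M.δ a s b) (conv φ) x y := hφ.1.1 s x y
        _ ≤ relComp (fun a b => M.δ a s b) (conv g) x y :=
            relComp_mono le_rfl (hconvle φ hφ) x y
    · intro x
      apply iSup_le; intro z
      show (⨆ φ ∈ S, φ z x) * M.τ z ≤ _
      rw [crl_iSup_mul]
      apply iSup_le; intro φ
      rw [crl_iSup_mul]
      apply iSup_le; intro hφ
      calc φ z x * M.τ z ≤ relSet (conv φ) M.τ x := le_relSet (conv φ) M.τ x z
        _ ≤ M.τ x := hφ.1.2 x
  have hbisim : IsFuzzyBisimulation M M g := ⟨hsim, by rw [hsymm]; exact hsim⟩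
  -- transitivity
  have htrans : relComp g g ≤ g := fun x y =>
    hle (relComp g g) (bisim_comp M hbisim hbisim) x y
  -- norm
  have hnorm1 : ∀ (φ : A → A → L), (∀ x, (1 : L) ≤ φ x x) → simNorm M M φ = 1 := by
    intro φ hφ
    rw [one_eq_top]
    apply top_unique
    show (⊤ : L) ≤ ⨅ x, himp (M.σ x) (setRel M.σ (conv φ) x)
    apply le_iInf; intro x
    rw [← adjoint, ← one_eq_top, one_mul]
    calc M.σ x = M.σ x * 1 := (mul_one _).symm
      _ ≤ M.σ x * conv φ x x := crl_mul_le le_rfl (hφ x)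
      _ ≤ setRel M.σ (conv φ) x := le_setRel M.σ (conv φ) x x
  have hnorm : bisimNorm M M g = 1 := by
    rw [bisimNorm, hnorm1 g href, hnorm1 (conv g) (fun x => href x), inf_idem]
  exact ⟨href, hsymm, htrans, hnorm⟩
end

section
/- If φ is a fuzzy bisimulation between fuzzy automata A and A', then for every x ∈ A and x' ∈ A': φ(x,x') ≤ E(L(A,x), L(A',x')), where E(f,g) = ⋀_w((f(w) → g(w)) ∧ (g(w) → f(w))) is the fuzzy degree of equality of the recognized fuzzy languages. -/
open CompleteResiduatedLattice

variable {L : Type*} [CompleteResiduatedLattice L]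

variable {Sig : Type*}

lemma crl_mul_mono_right {a b c : L} (h : a ≤ b) : c * a ≤ c * b := by
  have hb : b ≤ himp c (c * b) := (adjoint b c (c * b)).mp (by rw [mul_comm])
  have := (adjoint a c (c * b)).mpr (le_trans h hb)
  rwa [mul_comm] at this

lemma crl_mul_mono_left {a b c : L} (h : a ≤ b) : a * c ≤ b * c := by
  rw [mul_comm a c, mul_comm b c]; exact crl_mul_mono_right h

lemma crl_mul_iSup_le {ι : Sort*} {a c : L} {f : ι → L} (h : ∀ i, a * f i ≤ c) :
    a * (⨆ i, f i) ≤ c := by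
  rw [mul_comm]
  exact (adjoint _ _ _).mpr (iSup_le fun i => (adjoint _ _ _).mp (by rw [mul_comm]; exact h i))

lemma crl_iSup_mul_le {ι : Sort*} {a c : L} {f : ι → L} (h : ∀ i, f i * a ≤ c) :
    (⨆ i, f i) * a ≤ c :=
  (adjoint _ _ _).mpr (iSup_le fun i => (adjoint _ _ _).mp (h i))

lemma sim_langFrom_le {A A' : Type*} (M : FuzzyAutomaton L Sig A)
    (M' : FuzzyAutomaton L Sig A') (φ : A → A' → L)
    (h : IsFuzzySimulation M M' φ) :
    ∀ (w : List Sig) (x : A) (x' : A'),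
      φ x x' * langFrom M x w ≤ langFrom M' x' w := by
  intro w
  induction w with
  | nil =>
    intro x x'
    exact le_trans (le_iSup (fun z => conv φ x' z * M.τ z) x) (h.2 x')
  | cons s w ih =>
    intro x x'
    show φ x x' * (⨆ y, M.δ x s y * langFrom M y w) ≤ ⨆ y', M'.δ x' s y' * langFrom M' y' w
    apply crl_mul_iSup_le; intro y
    have h1 : φ x x' * M.δ x s y ≤ ⨆ y', M'.δ x' s y' * φ y y' :=
      le_trans (le_iSup (fun z => conv φ x' z * M.δ z s y) x) (h.1 s x' y)
    calc φ x x' * (M.δ x s y * langFrom M y w)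
        = (φ x x' * M.δ x s y) * langFrom M y w := (mul_assoc _ _ _).symm
      _ ≤ (⨆ y', M'.δ x' s y' * φ y y') * langFrom M y w := crl_mul_mono_left h1
      _ ≤ ⨆ y', M'.δ x' s y' * langFrom M' y' w := by
          apply crl_iSup_mul_le; intro y'
          rw [mul_assoc]
          exact le_trans (crl_mul_mono_right (ih y y')) (le_iSup (fun z => M'.δ x' s z * langFrom M' z w) y')

theorem stmt19 {A A' : Type*} [Nonempty A] [Nonempty A']
    (M : FuzzyAutomaton L Sig A) (M' : FuzzyAutomaton L Sig A')
    (φ : A → A' → L) (hφ : IsFuzzyBisimulation M M' φ) (x : A) (x' : A') :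
    φ x x' ≤ fuzE (langFrom M x) (langFrom M' x') := by
  apply le_iInf; intro w
  apply le_inf
  · exact (adjoint _ _ _).mp (sim_langFrom_le M M' φ hφ.1 w x x')
  · exact (adjoint _ _ _).mp (sim_langFrom_le M' M (conv φ) hφ.2 w x' x)
end
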